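/- Let P be a poset with least element 0 which is Z-directed, and let Z be a lower complete sublattice of P which is P-central, P-modular and Z-modular. Then an element p ∈ P is ≾_Z-finite (i.e. q ≤ p together with p ≾_Z q implies p = q) if and only if for every q ≤ p there exists z ∈ Z such that q is the infimum in P of p and z (i.e. the interval [0,p] equals {p∧z : z ∈ Z}). -/
import Mathlib


/-- `S` is `Z`-disjoint: there is `f : S → Z` with `p ≤ f p` and `f p ∧ f q = 0`
for distinct `p, q ∈ S`. -/
def ZDisjoint {β : Type*} [PartialOrder β] [OrderBot β] (Z S : Set β) : Prop :=
  ∃ f : β → β, (∀ p ∈ S, f p ∈ Z ∧ p ≤ f p) ∧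
    ∀ p ∈ S, ∀ q ∈ S, p ≠ q → Disjoint (f p) (f q)

/-- `I` is `Z`-complete: every `Z`-disjoint `S ⊆ I` has a supremum lying in `I`, and
whenever `{p, q}` is `Z`-disjoint with supremum in `I`, both `p` and `q` lie in `I`. -/
def ZComplete {β : Type*} [PartialOrder β] [OrderBot β] (Z I : Set β) : Prop :=
  (∀ S ⊆ I, ZDisjoint Z S → ∃ s, IsLUB S s ∧ s ∈ I) ∧
  (∀ p q s, ZDisjoint Z {p, q} → IsLUB {p, q} s → s ∈ I → p ∈ I ∧ q ∈ I)

/-- `Z` is `S`-central: for every `p ∈ S` and `y ∈ Z` there is `z ∈ Z` with `y ∧ z = 0`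
and `p` the supremum of some `q ≤ y` and `r ≤ z`. -/
def SCentral {β : Type*} [PartialOrder β] [OrderBot β] (Z S : Set β) : Prop :=
  ∀ p ∈ S, ∀ y ∈ Z, ∃ z ∈ Z, Disjoint y z ∧ ∃ q r, q ≤ y ∧ r ≤ z ∧ IsLUB {q, r} p
/-- `Z` is `P`-modular: disjoint pairs in `Z` are modular pairs. -/
def PModular {β : Type*} [PartialOrder β] [OrderBot β] (Z : Set β) : Prop :=
  ∀ y ∈ Z, ∀ z ∈ Z, Disjoint y z →
    ∀ p q s, p ≤ y → q ≤ z → IsLUB {p, q} s → IsGLB {z, s} q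
/-- `Z` is `Z`-modular: whenever `y, z ∈ Z` with `y ∧ z = 0`, `p, q ∈ Z` with `p ≤ y`,
`q ≤ z` and `p, q` have a least upper bound `s` within the subposet `Z`, then `q` is the
greatest lower bound within `Z` of `z` and `s`. -/
def ZModular {β : Type*} [PartialOrder β] [OrderBot β] (Z : Set β) : Prop :=
  ∀ y ∈ Z, ∀ z ∈ Z, Disjoint y z → ∀ p ∈ Z, ∀ q ∈ Z, p ≤ y → q ≤ z →
    ∀ s ∈ Z, (p ≤ s ∧ q ≤ s ∧ ∀ w ∈ Z, p ≤ w → q ≤ w → s ≤ w) →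
      (q ≤ s ∧ ∀ w ∈ Z, w ≤ z → w ≤ s → w ≤ q)
/-- Let `P` be `Z`-directed (`Z`-disjoint pairs have suprema) and `Z` a `P`-central,
`P`-modular, `Z`-modular lower complete sublattice of `P`.  Then `p` is `≾_Z`-finite
(meaning `q ≤ p` and `p ≾_Z q` imply `p = q`, where `p ≾_Z q` iff every `z ∈ Z` above
`q` is above `p`) if and only if every `q ≤ p` is the infimum in `P` of `p` and some
`z ∈ Z`, i.e. `[0, p] = {p ∧ z : z ∈ Z}`. -/
theorem stmt15 {α : Type*} [PartialOrder α] [OrderBot α] (Z : Set α)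
    (hdir : ∀ p q : α, ZDisjoint Z {p, q} → ∃ s, IsLUB {p, q} s)
    (hZl : ∀ S ⊆ Z, ∃ i, IsGLB S i ∧ i ∈ Z)
    (hcen : SCentral Z Set.univ) (hpm : PModular Z) (hzm : ZModular Z)
    (p : α) :
    (∀ q, q ≤ p → (∀ z ∈ Z, q ≤ z → p ≤ z) → p = q) ↔
    (∀ q, q ≤ p → ∃ z ∈ Z, IsGLB {p, z} q) := by
  constructor
  · intro hfin q hq
    obtain ⟨y, hyglb, hyZ⟩ := hZl {z | z ∈ Z ∧ q ≤ z} (fun z hz => hz.1)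
    have hqy : q ≤ y := hyglb.2 (fun z hz => hz.2)
    obtain ⟨z, hzZ, hdisj, q1, r, hq1y, hrz, hlub⟩ := hcen p trivial y hyZ
    have hrp : r ≤ p := hlub.1 (Set.mem_insert_iff.2 (Or.inr rfl))
    have hq1p : q1 ≤ p := hlub.1 (Set.mem_insert _ _)
    classical
    have hzd : ZDisjoint Z {q, r} := by
      refine ⟨fun x => if x = q then y else z, ?_, ?_⟩
      · intro x hx
        rcases hx with rfl | hx
        · simp [hyZ, hqy]
        · simp only [Set.mem_singleton_iff] at hx; subst hx
          by_cases h : x = q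
          · subst h; simp [hyZ, hqy]
          · simp [h, hzZ, hrz]
      · intro a ha b hb hab
        rcases ha with rfl | ha <;> rcases hb with rfl | hb
        · exact absurd rfl hab
        · simp only [Set.mem_singleton_iff] at hb; subst hb
          simp only [if_pos rfl, if_neg (Ne.symm hab)]
          exact hdisj
        · simp only [Set.mem_singleton_iff] at ha; subst ha
          simp only [if_pos rfl, if_neg hab]
          exact hdisj.symm
        · simp only [Set.mem_singleton_iff] at ha hb
          exact absurd (ha.trans hb.symm) hab
    obtain ⟨s, hslub⟩ := hdir q r hzd
    have hsp : s ≤ p := hslub.2 (by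
      intro x hx
      rcases hx with rfl | hx
      · exact hq
      · simp only [Set.mem_singleton_iff] at hx; subst hx; exact hrp)
    have hslub' : IsLUB {r, q} s := by rwa [Set.pair_comm]
    have hglbq : IsGLB {y, s} q := hpm z hzZ y hyZ hdisj.symm r q s hrz hqy hslub'
    have hps : p = s := by
      apply hfin s hsp
      intro w hwZ hsw
      have hqw : q ≤ w := (hslub.1 (Set.mem_insert _ _)).trans hsw
      have hyw : y ≤ w := hyglb.1 ⟨hwZ, hqw⟩
      have hrw : r ≤ w := (hslub.1 (Set.mem_insert_iff.2 (Or.inr rfl))).trans hsw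
      exact hlub.2 (by
        intro x hx
        rcases hx with rfl | hx
        · exact hq1y.trans hyw
        · simp only [Set.mem_singleton_iff] at hx; subst hx; exact hrw)
    refine ⟨y, hyZ, ?_⟩
    rw [Set.pair_comm, ← hps] at hglbq
    exact hglbq
  · intro h q hq hz
    obtain ⟨z, hzZ, hglb⟩ := h q hq
    have hqz : q ≤ z := hglb.1 (Set.mem_insert_iff.2 (Or.inr rfl))
    have hpz : p ≤ z := hz z hzZ hqz
    have hpq : p ≤ q := hglb.2 (by
      intro x hx
      rcases hx with rfl | hx
      · exact le_refl _
      · simp only [Set.mem_singleton_iff] at hx; subst hx; exact hpz)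
    exact le_antisymm hpq hq ▸ rfl
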